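/- Let A be a positive semidefinite operator on a complex Hilbert space H and T an A-bounded operator. Then max{w_A(T), ‖T‖_A²} ≤ dw_A(T) ≤ √(w_A(T)² + ‖T‖_A⁴). -/

import Mathlib

noncomputable section

namespace DW

variable {H : Type*} [NormedAddCommGroup H] [InnerProductSpace ℂ H]

/-- The semi-inner product induced by `A`: `⟨x,y⟩_A = ⟨Ax, y⟩`. -/
def innA (A : H →L[ℂ] H) (x y : H) : ℂ := inner ℂ (A x) y

/-- The seminorm induced by `A`. -/
def normA (A : H →L[ℂ] H) (x : H) : ℝ := Real.sqrt (innA A x x).re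

/-- `T` is `A`-bounded. -/
def IsABounded (A T : H →L[ℂ] H) : Prop := ∃ c > 0, ∀ x, normA A (T x) ≤ c * normA A x

/-- `S` is an `A`-adjoint of `T`. -/
def IsAAdjointPair (A T S : H →L[ℂ] H) : Prop := ∀ x y, innA A (T x) y = innA A x (S y)

/-- The `A`-operator seminorm. -/
def opNormA (A T : H →L[ℂ] H) : ℝ := sSup {r | ∃ x, normA A x = 1 ∧ r = normA A (T x)}

/-- The `A`-minimum modulus. -/
def mA (A T : H →L[ℂ] H) : ℝ := sInf {r | ∃ x, normA A x = 1 ∧ r = normA A (T x)}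

/-- The `A`-numerical radius. -/
def wA (A T : H →L[ℂ] H) : ℝ :=
  sSup {r | ∃ x, normA A x = 1 ∧ r = ‖innA A (T x) x‖}

/-- The `A`-Crawford number. -/
def cA (A T : H →L[ℂ] H) : ℝ :=
  sInf {r | ∃ x, normA A x = 1 ∧ r = ‖innA A (T x) x‖}

/-- The `A`-Davis-Wielandt radius. -/
def dwA (A T : H →L[ℂ] H) : ℝ :=
  sSup {r | ∃ x, normA A x = 1 ∧
    r = Real.sqrt (‖innA A (T x) x‖ ^ 2 + normA A (T x) ^ 4)}

/-- The semi-inner product on `H ⊕ H` induced by `𝔸 = diag(A,A)`. -/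
def innA2 (A : H →L[ℂ] H) (z w : H × H) : ℂ := innA A z.1 w.1 + innA A z.2 w.2

/-- The seminorm on `H ⊕ H` induced by `𝔸 = diag(A,A)`. -/
def normA2 (A : H →L[ℂ] H) (z : H × H) : ℝ := Real.sqrt (innA2 A z z).re

/-- The `𝔸`-numerical radius on `H ⊕ H`, `𝔸 = diag(A,A)`. -/
def wA2 (A : H →L[ℂ] H) (T : H × H →L[ℂ] H × H) : ℝ :=
  sSup {r | ∃ z, normA2 A z = 1 ∧ r = ‖innA2 A (T z) z‖}

/-- The `𝔸`-Davis-Wielandt radius on `H ⊕ H`, `𝔸 = diag(A,A)`. -/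
def dwA2 (A : H →L[ℂ] H) (T : H × H →L[ℂ] H × H) : ℝ :=
  sSup {r | ∃ z, normA2 A z = 1 ∧
    r = Real.sqrt (‖innA2 A (T z) z‖ ^ 2 + normA2 A (T z) ^ 4)}

/-- The block operator `[[0, X], [Y, 0]]` on `H ⊕ H`. -/
def offDiag (X Y : H →L[ℂ] H) : H × H →L[ℂ] H × H :=
  (X.comp (ContinuousLinearMap.snd ℂ H H)).prod (Y.comp (ContinuousLinearMap.fst ℂ H H))

end DW

open DW

variable {H : Type*} [NormedAddCommGroup H] [InnerProductSpace ℂ H] [CompleteSpace H]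


lemma re_nonnegA (A : H →L[ℂ] H) (hA : A.IsPositive) (x : H) : 0 ≤ (innA A x x).re := by
  exact (Complex.nonneg_iff.mp (hA.inner_nonneg_left x)).1

lemma normA_sq (A : H →L[ℂ] H) (hA : A.IsPositive) (x : H) :
    normA A x ^ 2 = (innA A x x).re :=
  Real.sq_sqrt (re_nonnegA A hA x)

lemma conj_symmA (A : H →L[ℂ] H) (hA : A.IsPositive) (x y : H) :
    (starRingEnd ℂ) (innA A y x) = innA A x y := by
  have hsym := hA.1 x y
  simp only [innA]
  simp only [ContinuousLinearMap.coe_coe] at hsym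
  rw [inner_conj_symm, ← hsym]

def coreA (A : H →L[ℂ] H) (hA : A.IsPositive) : PreInnerProductSpace.Core ℂ H where
  inner x y := innA A x y
  conj_inner_symm x y := conj_symmA A hA x y
  re_inner_nonneg x := by simpa using re_nonnegA A hA x
  add_left x y z := by simp [innA, inner_add_left]
  smul_left x y r := by simp [innA, inner_smul_left, mul_comm]

lemma cauchyA (A : H →L[ℂ] H) (hA : A.IsPositive) (x y : H) :
    ‖innA A x y‖ ≤ normA A x * normA A y := by
  have h := @InnerProductSpace.Core.inner_mul_inner_self_le ℂ H _ _ _ (coreA A hA) x y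
  have hxy : ‖innA A x y‖ * ‖innA A y x‖ ≤ (innA A x x).re * (innA A y y).re := by
    exact h
  have hsymm : ‖innA A y x‖ = ‖innA A x y‖ := by
    rw [← conj_symmA A hA x y]; simp
  rw [hsymm, ← normA_sq A hA x, ← normA_sq A hA y] at hxy
  have h1 : 0 ≤ normA A x := Real.sqrt_nonneg _
  have h2 : 0 ≤ normA A y := Real.sqrt_nonneg _
  have hab : (0:ℝ) ≤ ‖innA A x y‖ := norm_nonneg _
  have hxy' : ‖innA A x y‖ * ‖innA A x y‖
      ≤ normA A x ^ 2 * normA A y ^ 2 := hxy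
  calc ‖innA A x y‖
      = Real.sqrt (‖innA A x y‖ * ‖innA A x y‖) :=
        (Real.sqrt_mul_self hab).symm
    _ ≤ Real.sqrt (normA A x ^ 2 * normA A y ^ 2) := Real.sqrt_le_sqrt hxy'
    _ = normA A x * normA A y := by
        rw [← mul_pow, Real.sqrt_sq (by positivity)]

theorem stmt0 (A T : H →L[ℂ] H) (hA : A.IsPositive) (hT : IsABounded A T) :
    max (wA A T) (opNormA A T ^ 2) ≤ dwA A T ∧
      dwA A T ≤ Real.sqrt (wA A T ^ 2 + opNormA A T ^ 4) := by
  obtain ⟨c, hc, hbd⟩ := hT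
  have hTb : ∀ x, normA A x = 1 → normA A (T x) ≤ c := fun x hx => by simpa [hx] using hbd x
  have hb0 : ∀ x : H, 0 ≤ normA A (T x) := fun x => Real.sqrt_nonneg _
  have ha0 : ∀ x : H, (0:ℝ) ≤ ‖innA A (T x) x‖ := fun x => norm_nonneg _
  have ha_le : ∀ x, normA A x = 1 → ‖innA A (T x) x‖ ≤ c := fun x hx =>
    calc ‖innA A (T x) x‖ ≤ normA A (T x) * normA A x := cauchyA A hA (T x) x
      _ = normA A (T x) := by rw [hx, mul_one]
      _ ≤ c := hTb x hx
  have bddn : BddAbove {r | ∃ x, normA A x = 1 ∧ r = normA A (T x)} :=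
    ⟨c, by rintro r ⟨x, hx, rfl⟩; exact hTb x hx⟩
  have bddw : BddAbove {r | ∃ x, normA A x = 1 ∧ r = ‖innA A (T x) x‖} :=
    ⟨c, by rintro r ⟨x, hx, rfl⟩; exact ha_le x hx⟩
  have bdddw : BddAbove {r | ∃ x, normA A x = 1 ∧
      r = Real.sqrt (‖innA A (T x) x‖ ^ 2 + normA A (T x) ^ 4)} := by
    refine ⟨Real.sqrt (c ^ 2 + c ^ 4), ?_⟩
    rintro r ⟨x, hx, rfl⟩
    exact Real.sqrt_le_sqrt (add_le_add (pow_le_pow_left₀ (ha0 x) (ha_le x hx) 2)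
      (pow_le_pow_left₀ (hb0 x) (hTb x hx) 4))
  have hdw0 : 0 ≤ dwA A T := by
    apply Real.sSup_nonneg
    rintro r ⟨x, hx, rfl⟩
    exact Real.sqrt_nonneg _
  have hw0 : 0 ≤ wA A T := by
    apply Real.sSup_nonneg
    rintro r ⟨x, hx, rfl⟩
    exact ha0 x
  have hop0 : 0 ≤ opNormA A T := by
    apply Real.sSup_nonneg
    rintro r ⟨x, hx, rfl⟩
    exact hb0 x
  have hdw_mem : ∀ x, normA A x = 1 →
      Real.sqrt (‖innA A (T x) x‖ ^ 2 + normA A (T x) ^ 4) ≤ dwA A T :=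
    fun x hx => le_csSup bdddw ⟨x, hx, rfl⟩
  have hwdw : wA A T ≤ dwA A T := by
    apply Real.sSup_le _ hdw0
    rintro r ⟨x, hx, rfl⟩
    refine le_trans ?_ (hdw_mem x hx)
    rw [Real.le_sqrt (ha0 x)]
    · exact le_add_of_nonneg_right (by positivity)
    · positivity
  have hopdw : opNormA A T ^ 2 ≤ dwA A T := by
    have hn : opNormA A T ≤ Real.sqrt (dwA A T) := by
      apply Real.sSup_le _ (Real.sqrt_nonneg _)
      rintro r ⟨x, hx, rfl⟩
      have hb2 : normA A (T x) ^ 2 ≤ dwA A T := by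
        refine le_trans ?_ (hdw_mem x hx)
        rw [Real.le_sqrt (sq_nonneg _)]
        have : (normA A (T x) ^ 2) ^ 2 = normA A (T x) ^ 4 := by ring
        rw [this]
        · exact le_add_of_nonneg_left (by positivity)
        · positivity
      calc normA A (T x) = Real.sqrt (normA A (T x) ^ 2) := (Real.sqrt_sq (hb0 x)).symm
        _ ≤ Real.sqrt (dwA A T) := Real.sqrt_le_sqrt hb2
    calc opNormA A T ^ 2 ≤ Real.sqrt (dwA A T) ^ 2 := pow_le_pow_left₀ hop0 hn 2
      _ = dwA A T := Real.sq_sqrt hdw0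
  refine ⟨max_le hwdw hopdw, ?_⟩
  apply Real.sSup_le _ (Real.sqrt_nonneg _)
  rintro r ⟨x, hx, rfl⟩
  apply Real.sqrt_le_sqrt
  exact add_le_add (pow_le_pow_left₀ (ha0 x) (le_csSup bddw ⟨x, hx, rfl⟩) 2)
    (pow_le_pow_left₀ (hb0 x) (le_csSup bddn ⟨x, hx, rfl⟩) 4)
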